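/- arXiv:1710.07216 — 3 statements merged into one kernel-verified Lean document; each statement's English description precedes it below -/
import Mathlib

section
/- Let F ⊆ K be a field extension and let β, α₁, α₂ ∈ K be such that the set {β^u α₁^{q₁} α₂^{q₂} : 0 ≤ u < s, 0 ≤ q₁ < p₁, 0 ≤ q₂ < p₂} is linearly independent over F (where s = s₁·s₂). Let W₁ be a set of p₁ elements, each of the form β^{u₁} α₁^{e₁} for distinct e₁ (or a sum ∑_{u₁=0}^{s₁−1} β^{u₁} α₁^{p₁−1}), and W₂ a set of p₂ elements, each of the form β^{u₂ s₁} α₂^{e₂} for distinct e₂ (or a sum ∑_{u₂=0}^{s₂−1} β^{u₂ s₁} α₂^{p₂−1}). Then the p₁p₂ elements of the product set W₁ ⊙ W₂ = {γ₁γ₂ : γ₁ ∈ W₁, γ₂ ∈ W₂} are linearly independent over F. -/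
/-- If the monomials `β^u α₁^{q₁} α₂^{q₂}` (`u < s`, `q₁ < p₁`, `q₂ < p₂`) are
linearly independent over `F`, and `W₁`, `W₂` consist of elements of the
prescribed forms, then the `p₁p₂` pairwise products are linearly independent
over `F`. -/
theorem stmt5 (F K : Type*) [Field F] [Field K] [Algebra F K]
    (s₁ s₂ s p₁ p₂ : ℕ) (hs : s = s₁ * s₂)
    (hs₁ : 0 < s₁) (hs₂ : 0 < s₂) (hp₁ : 0 < p₁) (hp₂ : 0 < p₂)
    (β α₁ α₂ : K)
    (hli : LinearIndependent F (fun x : Fin s × Fin p₁ × Fin p₂ =>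
      β ^ (x.1 : ℕ) * α₁ ^ (x.2.1 : ℕ) * α₂ ^ (x.2.2 : ℕ)))
    (w₁ : Fin p₁ → K) (w₂ : Fin p₂ → K)
    (e₁ : Fin p₁ → Fin p₁) (he₁ : Function.Injective e₁)
    (e₂ : Fin p₂ → Fin p₂) (he₂ : Function.Injective e₂)
    (u₁ : Fin p₁ → Fin s₁) (u₂ : Fin p₂ → Fin s₂)
    (hw₁ : ∀ m, w₁ m = β ^ (u₁ m : ℕ) * α₁ ^ (e₁ m : ℕ) ∨
      (w₁ m = ∑ u ∈ Finset.range s₁, β ^ u * α₁ ^ (p₁ - 1) ∧ (e₁ m : ℕ) = p₁ - 1))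
    (hw₂ : ∀ m, w₂ m = β ^ ((u₂ m : ℕ) * s₁) * α₂ ^ (e₂ m : ℕ) ∨
      (w₂ m = ∑ u ∈ Finset.range s₂, β ^ (u * s₁) * α₂ ^ (p₂ - 1) ∧ (e₂ m : ℕ) = p₂ - 1)) :
    LinearIndependent F (fun x : Fin p₁ × Fin p₂ => w₁ x.1 * w₂ x.2) := by
  classical
  set V : Fin s × Fin p₁ × Fin p₂ → K :=
    fun x => β ^ (x.1 : ℕ) * α₁ ^ (x.2.1 : ℕ) * α₂ ^ (x.2.2 : ℕ) with hV
  haveI : NeZero s₁ := ⟨hs₁.ne'⟩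
  haveI : NeZero s₂ := ⟨hs₂.ne'⟩
  -- choose the "support" finsets for w₁ and w₂
  have hA₁ : ∀ m, ∃ A : Finset (Fin s₁), A.Nonempty ∧
      w₁ m = ∑ u ∈ A, β ^ (u : ℕ) * α₁ ^ (e₁ m : ℕ) := by
    intro m
    rcases hw₁ m with h | ⟨h, he⟩
    · exact ⟨{u₁ m}, Finset.singleton_nonempty _, by simpa using h⟩
    · refine ⟨Finset.univ, Finset.univ_nonempty, ?_⟩
      rw [h, he, ← Fin.sum_univ_eq_sum_range (fun u => β ^ u * α₁ ^ (p₁ - 1)) s₁]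
  have hA₂ : ∀ m, ∃ A : Finset (Fin s₂), A.Nonempty ∧
      w₂ m = ∑ u ∈ A, β ^ ((u : ℕ) * s₁) * α₂ ^ (e₂ m : ℕ) := by
    intro m
    rcases hw₂ m with h | ⟨h, he⟩
    · exact ⟨{u₂ m}, Finset.singleton_nonempty _, by simpa using h⟩
    · refine ⟨Finset.univ, Finset.univ_nonempty, ?_⟩
      rw [h, he, ← Fin.sum_univ_eq_sum_range (fun u => β ^ (u * s₁) * α₂ ^ (p₂ - 1)) s₂]
  choose A₁ hA₁ne hA₁eq using hA₁
  choose A₂ hA₂ne hA₂eq using hA₂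
  -- the index map
  have hιlt : ∀ p : Fin s₁ × Fin s₂, (p.1 : ℕ) + (p.2 : ℕ) * s₁ < s := by
    rintro ⟨a, b⟩
    rw [hs]
    calc (a : ℕ) + (b : ℕ) * s₁ < s₁ + (b : ℕ) * s₁ :=
          Nat.add_lt_add_right a.2 _
      _ = ((b : ℕ) + 1) * s₁ := by ring
      _ ≤ s₂ * s₁ := Nat.mul_le_mul_right _ b.2
      _ = s₁ * s₂ := Nat.mul_comm _ _
  set ι : Fin s₁ × Fin s₂ → Fin s := fun p => ⟨(p.1 : ℕ) + (p.2 : ℕ) * s₁, hιlt p⟩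
    with hι
  have hιinj : Function.Injective ι := by
    rintro ⟨a₁, b₁⟩ ⟨a₂, b₂⟩ h
    have h' : (a₁ : ℕ) + (b₁ : ℕ) * s₁ = (a₂ : ℕ) + (b₂ : ℕ) * s₁ :=
      congrArg Fin.val h
    have ha : (a₁ : ℕ) = (a₂ : ℕ) := by
      have := congrArg (· % s₁) h'
      simpa [Nat.add_mul_mod_self_right, Nat.mod_eq_of_lt a₁.2,
        Nat.mod_eq_of_lt a₂.2] using this
    have hb : (b₁ : ℕ) = (b₂ : ℕ) := by
      have := congrArg (· / s₁) h'
      simpa [Nat.add_mul_div_right _ _ hs₁, Nat.div_eq_of_lt a₁.2,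
        Nat.div_eq_of_lt a₂.2] using this
    exact Prod.ext (Fin.ext ha) (Fin.ext hb)
  set S : Fin p₁ × Fin p₂ → Finset (Fin s) :=
    fun m => (A₁ m.1 ×ˢ A₂ m.2).image ι with hS
  have hSne : ∀ m, (S m).Nonempty := fun m =>
    ((hA₁ne m.1).product (hA₂ne m.2)).image ι
  -- expand products as sums of the independent monomials
  have hprod : ∀ m : Fin p₁ × Fin p₂,
      w₁ m.1 * w₂ m.2 = ∑ u ∈ S m, V (u, e₁ m.1, e₂ m.2) := by
    intro m
    rw [hS]
    rw [Finset.sum_image (fun x _ y _ h => hιinj h)]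
    rw [hA₁eq, hA₂eq, Finset.sum_mul_sum, ← Finset.sum_product']
    refine Finset.sum_congr rfl ?_
    rintro ⟨a, b⟩ -
    simp only [hV, hι]
    rw [pow_add]
    ring
  rw [Fintype.linearIndependent_iff] at hli ⊢
  intro g hg m0
  set G : Fin s × Fin p₁ × Fin p₂ → F := fun x =>
    ∑ m : Fin p₁ × Fin p₂,
      if x.1 ∈ S m ∧ e₁ m.1 = x.2.1 ∧ e₂ m.2 = x.2.2 then g m else 0 with hG
  have hGzero : ∀ x, G x = 0 := by
    apply hli
    have : ∑ x, G x • V x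
        = ∑ m : Fin p₁ × Fin p₂, g m • (w₁ m.1 * w₂ m.2) := by
      simp only [hG, Finset.sum_smul, ite_smul, zero_smul]
      rw [Finset.sum_comm]
      refine Finset.sum_congr rfl ?_
      intro m _
      rw [← Finset.sum_filter]
      have hfilt : Finset.univ.filter
            (fun x : Fin s × Fin p₁ × Fin p₂ =>
              x.1 ∈ S m ∧ e₁ m.1 = x.2.1 ∧ e₂ m.2 = x.2.2)
          = (S m).image (fun u => (u, e₁ m.1, e₂ m.2)) := by
        ext x
        simp only [Finset.mem_filter, Finset.mem_univ, true_and, Finset.mem_image]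
        constructor
        · rintro ⟨h1, h2, h3⟩
          exact ⟨x.1, h1, by
            obtain ⟨x1, x2, x3⟩ := x
            simp_all⟩
        · rintro ⟨u, hu, rfl⟩
          exact ⟨hu, rfl, rfl⟩
      rw [hfilt, Finset.sum_image (by intro a _ b _ h; exact (Prod.mk.injEq _ _ _ _ ▸ h).1)]
      rw [hprod m, Finset.smul_sum]
    rw [this, ← hg]
  obtain ⟨u0, hu0⟩ := hSne m0
  have h0 := hGzero (u0, e₁ m0.1, e₂ m0.2)
  simp only [hG] at h0
  have : ∀ m : Fin p₁ × Fin p₂,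
      (if u0 ∈ S m ∧ e₁ m.1 = e₁ m0.1 ∧ e₂ m.2 = e₂ m0.2 then g m else 0)
        = if m = m0 then g m0 else 0 := by
    intro m
    by_cases hm : m = m0
    · subst hm; simp [hu0]
    · rw [if_neg hm, if_neg]
      rintro ⟨-, h1, h2⟩
      exact hm (Prod.ext (he₁ h1) (he₂ h2))
  rw [Finset.sum_congr rfl (fun m _ => this m)] at h0
  simpa using h0
end

section
/- Let F be a field, K an extension, and let α ∈ K have degree p over F (i.e., [F(α):F] = p). Let β ∈ K generate an extension of F(α) with {1, β, ..., β^{s−1}} linearly independent over F(α), where s = s₁ s₂ and s₁ | (p − 1). Define W := {β^{u} α^{u + q s₁} : 0 ≤ u ≤ s₁−1, 0 ≤ q ≤ (p−1)/s₁ − 1} ∪ {∑_{u=0}^{s₁−1} β^{u} α^{p−1}}. Then span_F(W) + span_F(Wα) + ... + span_F(W α^{s₁−1}) = ⊕_{u=0}^{s₁−1} β^{u} F(α). -/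
/-- Proposition: `span_F(W) + span_F(Wα) + ⋯ + span_F(Wα^{s₁−1})
= ⊕_{u<s₁} β^u F(α)`, where `W` is as in the repair construction. -/
theorem stmt11 (F K : Type*) [Field F] [Field K] [Algebra F K]
    (p s₁ s₂ s : ℕ) (hp : p.Prime) (hs₁ : 0 < s₁) (hs₂ : 0 < s₂)
    (hs : s = s₁ * s₂) (hdvd : s₁ ∣ p - 1)
    (α β : K)
    (hα : Module.finrank F (IntermediateField.adjoin F {α}) = p)
    (hβ : LinearIndependent (IntermediateField.adjoin F {α})
      (fun u : Fin s => β ^ (u : ℕ)))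
    (W : Set K)
    (hW : W = {x | ∃ u < s₁, ∃ q < (p - 1) / s₁, x = β ^ u * α ^ (u + q * s₁)} ∪
        {∑ u ∈ Finset.range s₁, β ^ u * α ^ (p - 1)}) :
    (⨆ j ∈ Finset.range s₁, Submodule.span F ((fun x => x * α ^ j) '' W)) =
      ⨆ u ∈ Finset.range s₁, Submodule.span F
        ((fun c => β ^ u * c) '' (IntermediateField.adjoin F {α} : Set K)) := by
  have hp2 : 2 ≤ p := hp.two_le
  set E := IntermediateField.adjoin F {α} with hEdef
  have hαE : α ∈ E := IntermediateField.mem_adjoin_simple_self F α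
  have hαne : α ≠ 0 := by
    rintro rfl
    rw [hEdef, IntermediateField.adjoin_zero, IntermediateField.finrank_bot] at hα
    omega
  haveI hfd : FiniteDimensional F E :=
    FiniteDimensional.of_finrank_pos (by rw [hα]; exact hp.pos)
  have hint : IsIntegral F α :=
    IntermediateField.isIntegral_iff.mp (IsIntegral.of_finite F (⟨α, hαE⟩ : E))
  have hdeg : (minpoly F α).natDegree = p := by
    rw [← IntermediateField.adjoin.finrank hint]; exact hα
  have hs₁p : s₁ ≤ p - 1 := Nat.le_of_dvd (by omega) hdvd
  -- Step A: `E` is spanned over `F` by `α^i`, `i < p`.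
  have hA : ∀ x ∈ E, x ∈ Submodule.span F {y : K | ∃ i < p, y = α ^ i} := by
    intro x hx
    set pb := IntermediateField.adjoin.powerBasis hint with hpb
    have htop : (⟨x, hx⟩ : E) ∈ Submodule.span F (Set.range pb.basis) := by
      rw [pb.basis.span_eq]; trivial
    have hm := Submodule.mem_map_of_mem (f := E.val.toLinearMap) htop
    rw [Submodule.map_span, ← Set.range_comp] at hm
    have hsub : Set.range (E.val.toLinearMap ∘ pb.basis) ⊆ {y : K | ∃ i < p, y = α ^ i} := by
      rintro _ ⟨i, rfl⟩
      refine ⟨(i : ℕ), ?_, ?_⟩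
      · have hdim : pb.dim = p := by
          rw [hpb, IntermediateField.adjoin.powerBasis_dim, hdeg]
        exact lt_of_lt_of_eq i.2 hdim
      · simp [PowerBasis.coe_basis, hpb]
    exact Submodule.span_mono hsub hm
  -- Step B: for any `b` and `t`, `b * x ∈ span {b * α^(t+i) : i < p}` for `x ∈ E`.
  have hBC : ∀ (b : K) (t : ℕ) (x : K), x ∈ E →
      b * x ∈ Submodule.span F {y : K | ∃ i < p, y = b * α ^ (t + i)} := by
    intro b t x hx
    have hy : (α ^ t)⁻¹ * x ∈ E := mul_mem (inv_mem (pow_mem hαE t)) hx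
    have key : ∀ y ∈ Submodule.span F {y : K | ∃ i < p, y = α ^ i},
        b * α ^ t * y ∈ Submodule.span F {y : K | ∃ i < p, y = b * α ^ (t + i)} := by
      intro y hy
      induction hy using Submodule.span_induction with
      | mem z hz =>
        obtain ⟨i, hi, rfl⟩ := hz
        exact Submodule.subset_span ⟨i, hi, by rw [pow_add]; ring⟩
      | zero => simpa using Submodule.zero_mem _
      | add a c _ _ ha hc => rw [mul_add]; exact Submodule.add_mem _ ha hc
      | smul r a _ ha => rw [mul_smul_comm]; exact Submodule.smul_mem _ r ha
    have hαt : (α : K) ^ t ≠ 0 := pow_ne_zero _ hαne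
    have heq : b * x = b * α ^ t * ((α ^ t)⁻¹ * x) := by
      field_simp
    rw [heq]
    exact key _ (hA _ hy)
  set L := ⨆ j ∈ Finset.range s₁, Submodule.span F ((fun x => x * α ^ j) '' W) with hL
  -- generators lie in `L`
  have hgen : ∀ j, j < s₁ → ∀ w ∈ W, w * α ^ j ∈ L := by
    intro j hj w hw
    have h1 : Submodule.span F ((fun x => x * α ^ j) '' W) ≤ L :=
      le_iSup₂ (f := fun j _ => Submodule.span F ((fun x => x * α ^ j) '' W)) j
        (Finset.mem_range.2 hj)
    exact h1 (Submodule.subset_span ⟨w, hw, rfl⟩)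
  -- all `β^u α^e` with `u ≤ e ≤ u + p - 2` lie in `L`
  have hG : ∀ u, u < s₁ → ∀ e, u ≤ e → e ≤ u + p - 2 → β ^ u * α ^ e ∈ L := by
    intro u hu e hue hep
    obtain ⟨t, rfl⟩ : ∃ t, e = u + t := ⟨e - u, by omega⟩
    have hq : t / s₁ < (p - 1) / s₁ := Nat.div_lt_div_of_lt_of_dvd hdvd (by omega)
    have hwW : β ^ u * α ^ (u + (t / s₁) * s₁) ∈ W := by
      rw [hW]; exact Or.inl ⟨u, hu, t / s₁, hq, rfl⟩
    have hmem := hgen (t % s₁) (Nat.mod_lt _ hs₁) _ hwW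
    have he : u + t / s₁ * s₁ + t % s₁ = u + t := by
      have h1 := Nat.div_add_mod t s₁
      have h2 : t / s₁ * s₁ = s₁ * (t / s₁) := Nat.mul_comm _ _
      omega
    rwa [mul_assoc, ← pow_add, he] at hmem
  -- the "special" elements lie in `L`
  have hS : ∀ j, j < s₁ → (∑ u ∈ Finset.range s₁, β ^ u * α ^ (p - 1 + j)) ∈ L := by
    intro j hj
    have hwW : (∑ u ∈ Finset.range s₁, β ^ u * α ^ (p - 1)) ∈ W := by
      rw [hW]; exact Or.inr rfl
    have hmem := hgen j hj _ hwW
    rw [Finset.sum_mul] at hmem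
    simp only [mul_assoc, ← pow_add] at hmem
    exact hmem
  -- main induction: each `β^u F(α)` is contained in `L`
  have hmain : ∀ u, u < s₁ →
      Submodule.span F ((fun c => β ^ u * c) '' (E : Set K)) ≤ L := by
    intro u
    induction u using Nat.strong_induction_on with
    | _ u ih =>
      intro hu
      have hterm : ∀ v ∈ Finset.range s₁, v ≠ u → β ^ v * α ^ (p - 1 + u) ∈ L := by
        intro v hv hne
        rw [Finset.mem_range] at hv
        rcases Nat.lt_or_ge v u with hlt | hge
        · exact ih v hlt hv (Submodule.subset_span ⟨α ^ (p - 1 + u), pow_mem hαE _, rfl⟩)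
        · have hgt : u < v := lt_of_le_of_ne hge (Ne.symm hne)
          exact hG v hv (p - 1 + u) (by omega) (by omega)
      have hlast : β ^ u * α ^ (p - 1 + u) ∈ L := by
        have h1 := hS u hu
        have h2 : β ^ u * α ^ (p - 1 + u) =
            (∑ v ∈ Finset.range s₁, β ^ v * α ^ (p - 1 + u)) -
              ∑ v ∈ (Finset.range s₁).erase u, β ^ v * α ^ (p - 1 + u) := by
          rw [Finset.sum_erase_eq_sub (Finset.mem_range.2 hu)]
          ring
        rw [h2]
        exact Submodule.sub_mem _ h1 (Submodule.sum_mem _ fun v hv =>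
          hterm v (Finset.mem_of_mem_erase hv) (Finset.ne_of_mem_erase hv))
      have hall : ∀ i, i < p → β ^ u * α ^ (u + i) ∈ L := by
        intro i hi
        rcases Nat.lt_or_ge i (p - 1) with h | h
        · exact hG u hu (u + i) (Nat.le_add_right _ _) (by omega)
        · have hieq : i = p - 1 := by omega
          subst hieq
          rw [show u + (p - 1) = p - 1 + u from by omega]
          exact hlast
      refine Submodule.span_le.2 ?_
      rintro _ ⟨x, hx, rfl⟩
      have hx' := hBC (β ^ u) u x hx
      refine Submodule.span_le.2 ?_ hx'
      rintro _ ⟨i, hi, rfl⟩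
      exact hall i hi
  refine le_antisymm (iSup₂_le fun j hj => ?_)
    (iSup₂_le fun u hu => hmain u (Finset.mem_range.1 hu))
  rw [Finset.mem_range] at hj
  refine Submodule.span_le.2 ?_
  rintro _ ⟨w, hw, rfl⟩
  rw [hW] at hw
  rcases hw with ⟨u, hu, q, hq, rfl⟩ | rfl
  · have hle : Submodule.span F ((fun c => β ^ u * c) '' (E : Set K)) ≤
        ⨆ u ∈ Finset.range s₁, Submodule.span F ((fun c => β ^ u * c) '' (E : Set K)) :=
      le_iSup₂ (f := fun u _ => Submodule.span F ((fun c => β ^ u * c) '' (E : Set K))) u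
        (Finset.mem_range.2 hu)
    exact hle (Submodule.subset_span
      ⟨α ^ (u + q * s₁) * α ^ j, mul_mem (pow_mem hαE _) (pow_mem hαE _),
        (mul_assoc _ _ _).symm⟩)
  · show (∑ u ∈ Finset.range s₁, β ^ u * α ^ (p - 1)) * α ^ j ∈
      (⨆ u ∈ Finset.range s₁,
        Submodule.span F ((fun c => β ^ u * c) '' (E : Set K)) : Submodule F K)
    rw [Finset.sum_mul]
    apply Submodule.sum_mem
    intro v hv
    have hle : Submodule.span F ((fun c => β ^ v * c) '' (E : Set K)) ≤
        ⨆ u ∈ Finset.range s₁, Submodule.span F ((fun c => β ^ u * c) '' (E : Set K)) :=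
      le_iSup₂ (f := fun u _ => Submodule.span F ((fun c => β ^ u * c) '' (E : Set K))) v hv
    exact hle (Submodule.subset_span
      ⟨α ^ (p - 1) * α ^ j, mul_mem (pow_mem hαE _) (pow_mem hαE _),
        (mul_assoc _ _ _).symm⟩)
end

section
/- With notation as in the two-erasure repair construction (s₁ = d+1−k, s₂ = d+2−k, s = s₁s₂, α_{i₁}, α_{i₂} of coprime prime degrees p_{i₁}, p_{i₂} over F, and β of degree s over F(α_{i₁}, α_{i₂})), the subspaces span_F(S_{i₁}) and span_F(S_{i₂}) satisfy dim_F(span_F(S_{i₁}) ∩ span_F(S_{i₂})) = p_{i₁} p_{i₂}, where S_{i₁} = ∪_{u₂, q₂} β^{u₂ s₁} α_{i₂}^{q₂} W_{i₁} and S_{i₂} = ∪_{u₁, q₁} β^{u₁} α_{i₁}^{q₁} W_{i₂}, with W_{i₁}, W_{i₂} defined as in the construction. -/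
open Finset Submodule

section TwoErasure

variable {F K : Type*} [Field F] [Field K] [Algebra F K]
variable {s s₁ s₂ p₁ p₂ : ℕ}

/-- basic bound: `a + b*s₁ < s = s₁*s₂` when `a < s₁`, `b < s₂`. -/
lemma te_arith (hs : s = s₁ * s₂) {a bb : ℕ} (ha : a < s₁) (hb : bb < s₂) :
    a + bb * s₁ < s := by
  have h1 : a + bb * s₁ < (bb + 1) * s₁ := by
    rw [Nat.succ_mul, Nat.add_comm (bb * s₁) s₁]
    exact Nat.add_lt_add_right ha _
  have h2 : (bb + 1) * s₁ ≤ s₂ * s₁ := Nat.mul_le_mul_right _ hb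
  have : s = s₂ * s₁ := by rw [hs, Nat.mul_comm]
  omega

lemma te_s1_pos (hs : s = s₁ * s₂) (h0 : 0 < s) : 0 < s₁ := by
  rcases Nat.eq_zero_or_pos s₁ with h | h
  · subst h; simp [hs] at h0
  · exact h

lemma te_s2_pos (hs : s = s₁ * s₂) (h0 : 0 < s) : 0 < s₂ := by
  rcases Nat.eq_zero_or_pos s₂ with h | h
  · subst h; simp [hs] at h0
  · exact h

lemma te_div_lt (hs : s = s₁ * s₂) (u : Fin s) : (u : ℕ) / s₁ < s₂ :=
  Nat.div_lt_of_lt_mul (by rw [← hs]; exact u.isLt)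

/-- index of the `v`-th element of the row through `i`. -/
def rowIdx (hs : s = s₁ * s₂) (i : Fin s × Fin p₁ × Fin p₂) (v : Fin s₁) :
    Fin s × Fin p₁ × Fin p₂ :=
  (⟨(i.1 : ℕ) / s₁ * s₁ + (v : ℕ), by
    rw [Nat.add_comm]; exact te_arith hs v.isLt (te_div_lt hs i.1)⟩, i.2)

/-- index of the `v`-th element of the column through `i`. -/
def colIdx (hs : s = s₁ * s₂) (i : Fin s × Fin p₁ × Fin p₂) (v : Fin s₂) :
    Fin s × Fin p₁ × Fin p₂ :=
  (⟨(i.1 : ℕ) % s₁ + (v : ℕ) * s₁,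
    te_arith hs (Nat.mod_lt _ (te_s1_pos hs i.1.pos)) v.isLt⟩, i.2)

/-- the new basis family. -/
noncomputable def cvec (hs : s = s₁ * s₂)
    (b : Module.Basis (Fin s × Fin p₁ × Fin p₂) F K)
    (i : Fin s × Fin p₁ × Fin p₂) : K :=
  if ((i.2.1 : ℕ) = p₁ - 1 ∧ (i.1 : ℕ) % s₁ = 0) then
    if ((i.2.2 : ℕ) = p₂ - 1 ∧ (i.1 : ℕ) / s₁ = 0) then ∑ v : Fin s, b (v, i.2)
    else ∑ v : Fin s₁, b (rowIdx hs i v)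
  else if ((i.2.2 : ℕ) = p₂ - 1 ∧ (i.1 : ℕ) / s₁ = 0) then ∑ v : Fin s₂, b (colIdx hs i v)
  else b i

lemma cvec_single (hs : s = s₁ * s₂) (b : Module.Basis (Fin s × Fin p₁ × Fin p₂) F K)
    {i : Fin s × Fin p₁ × Fin p₂}
    (h1 : ¬((i.2.1 : ℕ) = p₁ - 1 ∧ (i.1 : ℕ) % s₁ = 0))
    (h2 : ¬((i.2.2 : ℕ) = p₂ - 1 ∧ (i.1 : ℕ) / s₁ = 0)) :
    cvec hs b i = b i := by
  rw [cvec, if_neg h1, if_neg h2]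

lemma cvec_row (hs : s = s₁ * s₂) (b : Module.Basis (Fin s × Fin p₁ × Fin p₂) F K)
    {i : Fin s × Fin p₁ × Fin p₂}
    (h1 : ((i.2.1 : ℕ) = p₁ - 1 ∧ (i.1 : ℕ) % s₁ = 0))
    (h2 : ¬((i.2.2 : ℕ) = p₂ - 1 ∧ (i.1 : ℕ) / s₁ = 0)) :
    cvec hs b i = ∑ v : Fin s₁, b (rowIdx hs i v) := by
  rw [cvec, if_pos h1, if_neg h2]

lemma cvec_col (hs : s = s₁ * s₂) (b : Module.Basis (Fin s × Fin p₁ × Fin p₂) F K)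
    {i : Fin s × Fin p₁ × Fin p₂}
    (h1 : ¬((i.2.1 : ℕ) = p₁ - 1 ∧ (i.1 : ℕ) % s₁ = 0))
    (h2 : ((i.2.2 : ℕ) = p₂ - 1 ∧ (i.1 : ℕ) / s₁ = 0)) :
    cvec hs b i = ∑ v : Fin s₂, b (colIdx hs i v) := by
  rw [cvec, if_neg h1, if_pos h2]

lemma cvec_t (hs : s = s₁ * s₂) (b : Module.Basis (Fin s × Fin p₁ × Fin p₂) F K)
    {i : Fin s × Fin p₁ × Fin p₂}
    (h1 : ((i.2.1 : ℕ) = p₁ - 1 ∧ (i.1 : ℕ) % s₁ = 0))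
    (h2 : ((i.2.2 : ℕ) = p₂ - 1 ∧ (i.1 : ℕ) / s₁ = 0)) :
    cvec hs b i = ∑ v : Fin s, b (v, i.2) := by
  rw [cvec, if_pos h1, if_pos h2]


/-- splitting a sum over `Fin s` into rows. -/
lemma sum_split_row {M : Type*} [AddCommMonoid M] (hs : s = s₁ * s₂) (f : Fin s → M) :
    ∑ v : Fin s, f v =
      ∑ v₂ : Fin s₂, ∑ v₁ : Fin s₁,
        f ⟨(v₂ : ℕ) * s₁ + (v₁ : ℕ), by
          rw [Nat.add_comm]; exact te_arith hs v₁.isLt v₂.isLt⟩ := by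
  rw [← Finset.sum_product']
  refine (Fintype.sum_bijective
    (fun p : Fin s₂ × Fin s₁ =>
      (⟨(p.1 : ℕ) * s₁ + (p.2 : ℕ), by
        rw [Nat.add_comm]; exact te_arith hs p.2.isLt p.1.isLt⟩ : Fin s))
    ?_ _ _ (fun p => rfl)).symm
  rw [Fintype.bijective_iff_injective_and_card]
  constructor
  · rintro ⟨a₂, a₁⟩ ⟨c₂, c₁⟩ h
    have hv : (a₂ : ℕ) * s₁ + (a₁ : ℕ) = (c₂ : ℕ) * s₁ + (c₁ : ℕ) := Fin.mk.inj_iff.mp h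
    have h1 : (a₁ : ℕ) = (c₁ : ℕ) := by
      have := congrArg (· % s₁) hv
      simpa [Nat.add_comm, Nat.add_mul_mod_self_right,
        Nat.mod_eq_of_lt a₁.isLt, Nat.mod_eq_of_lt c₁.isLt] using this
    have h2 : (a₂ : ℕ) = (c₂ : ℕ) := by
      have h01 : 0 < s₁ := a₁.pos
      have := congrArg (· / s₁) hv
      simp only [Nat.add_comm _ (_ : ℕ), Nat.add_mul_div_right _ _ h01] at this
      simpa [Nat.add_comm, Nat.add_mul_div_right _ _ h01,
        Nat.div_eq_of_lt a₁.isLt, Nat.div_eq_of_lt c₁.isLt] using this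
    exact Prod.ext (Fin.ext h2) (Fin.ext h1)
  · simp [hs, Nat.mul_comm]

/-- splitting a sum over `Fin s` into columns. -/
lemma sum_split_col {M : Type*} [AddCommMonoid M] (hs : s = s₁ * s₂) (f : Fin s → M) :
    ∑ v : Fin s, f v =
      ∑ v₁ : Fin s₁, ∑ v₂ : Fin s₂,
        f ⟨(v₁ : ℕ) + (v₂ : ℕ) * s₁, te_arith hs v₁.isLt v₂.isLt⟩ := by
  rw [sum_split_row hs f, Finset.sum_comm]
  refine Finset.sum_congr rfl fun v₁ _ => Finset.sum_congr rfl fun v₂ _ => ?_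
  congr 1
  exact Fin.ext (Nat.add_comm _ _)

/-- every `b i` lies in the span of the range of `cvec`. -/
lemma cvec_top (hs : s = s₁ * s₂) (b : Module.Basis (Fin s × Fin p₁ × Fin p₂) F K) :
    ⊤ ≤ Submodule.span F (Set.range (cvec hs b)) := by
  rw [← b.span_eq]
  rw [Submodule.span_le]
  rintro x ⟨i, rfl⟩
  suffices H : ∀ n (i : Fin s × Fin p₁ × Fin p₂), s - (i.1 : ℕ) ≤ n →
      b i ∈ Submodule.span F (Set.range (cvec hs b)) from H s i (by omega)
  intro n
  induction n with
  | zero => exact fun i h => absurd i.1.isLt (by omega)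
  | succ n ih =>
    intro i hn
    have h0s : 0 < s := i.1.pos
    have h01 : 0 < s₁ := te_s1_pos hs h0s
    have h02 : 0 < s₂ := te_s2_pos hs h0s
    have hdm := Nat.div_add_mod' (i.1 : ℕ) s₁
    by_cases h1 : ((i.2.1 : ℕ) = p₁ - 1 ∧ (i.1 : ℕ) % s₁ = 0)
    · by_cases h2 : ((i.2.2 : ℕ) = p₂ - 1 ∧ (i.1 : ℕ) / s₁ = 0)
      · -- t case : i.1 = 0
        have hi0 : (i.1 : ℕ) = 0 := by rw [h1.2, h2.2] at hdm; omega
        have hsum := Finset.add_sum_erase Finset.univ (fun v : Fin s => b (v, i.2))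
          (Finset.mem_univ i.1)
        have hbi : b i = cvec hs b i - ∑ v ∈ Finset.univ.erase i.1, b (v, i.2) := by
          rw [cvec_t hs b h1 h2, ← hsum]
          simp
        rw [hbi]
        refine sub_mem (Submodule.subset_span ⟨i, rfl⟩)
          (Submodule.sum_mem _ fun v hv => ?_)
        have hvne : (v : ℕ) ≠ (i.1 : ℕ) :=
          fun h => Finset.ne_of_mem_erase hv (Fin.ext h)
        exact ih (v, i.2) (by have := v.isLt; simp only; omega)
      · -- row case
        have hi1 : (i.1 : ℕ) / s₁ * s₁ = (i.1 : ℕ) := by omega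
        set v₀ : Fin s₁ := ⟨0, h01⟩ with hv₀
        have hidx : rowIdx hs i v₀ = i := by
          refine Prod.ext (Fin.ext ?_) rfl
          show (i.1 : ℕ) / s₁ * s₁ + 0 = (i.1 : ℕ)
          omega
        have hsum := Finset.add_sum_erase Finset.univ (fun v : Fin s₁ => b (rowIdx hs i v))
          (Finset.mem_univ v₀)
        have hbi : b i = cvec hs b i - ∑ v ∈ Finset.univ.erase v₀, b (rowIdx hs i v) := by
          rw [cvec_row hs b h1 h2, ← hsum]
          simp only [hidx]
          ring
        rw [hbi]
        refine sub_mem (Submodule.subset_span ⟨i, rfl⟩)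
          (Submodule.sum_mem _ fun v hv => ?_)
        have hvne : (v : ℕ) ≠ 0 :=
          fun h => Finset.ne_of_mem_erase hv (Fin.ext h)
        refine ih (rowIdx hs i v) ?_
        show s - ((i.1 : ℕ) / s₁ * s₁ + (v : ℕ)) ≤ n
        have := (rowIdx hs i v).1.isLt
        simp only [rowIdx] at this
        omega
    · by_cases h2 : ((i.2.2 : ℕ) = p₂ - 1 ∧ (i.1 : ℕ) / s₁ = 0)
      · -- col case
        have hi1 : (i.1 : ℕ) % s₁ = (i.1 : ℕ) := by
          rw [h2.2] at hdm; omega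
        set v₀ : Fin s₂ := ⟨0, h02⟩ with hv₀
        have hidx : colIdx hs i v₀ = i := by
          refine Prod.ext (Fin.ext ?_) rfl
          show (i.1 : ℕ) % s₁ + 0 * s₁ = (i.1 : ℕ)
          omega
        have hsum := Finset.add_sum_erase Finset.univ (fun v : Fin s₂ => b (colIdx hs i v))
          (Finset.mem_univ v₀)
        have hbi : b i = cvec hs b i - ∑ v ∈ Finset.univ.erase v₀, b (colIdx hs i v) := by
          rw [cvec_col hs b h1 h2, ← hsum]
          simp only [hidx]
          ring
        rw [hbi]
        refine sub_mem (Submodule.subset_span ⟨i, rfl⟩)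
          (Submodule.sum_mem _ fun v hv => ?_)
        have hvne : (v : ℕ) ≠ 0 :=
          fun h => Finset.ne_of_mem_erase hv (Fin.ext h)
        refine ih (colIdx hs i v) ?_
        show s - ((i.1 : ℕ) % s₁ + (v : ℕ) * s₁) ≤ n
        have hlt := (colIdx hs i v).1.isLt
        simp only [colIdx] at hlt
        have : s₁ ≤ (v : ℕ) * s₁ := Nat.le_mul_of_pos_left _ (Nat.pos_of_ne_zero hvne)
        omega
      · rw [← cvec_single hs b h1 h2]
        exact Submodule.subset_span ⟨i, rfl⟩

/-- intersection of spans of subsets of a basis. -/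
lemma span_image_inter {V ι : Type*} [AddCommGroup V] [Module F V]
    (c : Module.Basis ι F V) (I J : Set ι) :
    Submodule.span F (⇑c '' I) ⊓ Submodule.span F (⇑c '' J) =
      Submodule.span F (⇑c '' (I ∩ J)) := by
  refine le_antisymm (fun x hx => ?_)
    (le_inf (Submodule.span_mono (Set.image_mono Set.inter_subset_left))
      (Submodule.span_mono (Set.image_mono Set.inter_subset_right)))
  rw [Submodule.mem_inf] at hx
  exact c.mem_span_image.mpr
    (Set.subset_inter (c.mem_span_image.mp hx.1) (c.mem_span_image.mp hx.2))


lemma rowIdx_val (hs : s = s₁ * s₂) (i : Fin s × Fin p₁ × Fin p₂) (v : Fin s₁) :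
    ((rowIdx hs i v).1 : ℕ) = (i.1 : ℕ) / s₁ * s₁ + (v : ℕ) := rfl

lemma colIdx_val (hs : s = s₁ * s₂) (i : Fin s × Fin p₁ × Fin p₂) (v : Fin s₂) :
    ((colIdx hs i v).1 : ℕ) = (i.1 : ℕ) % s₁ + (v : ℕ) * s₁ := rfl

lemma rowIdx_snd (hs : s = s₁ * s₂) (i : Fin s × Fin p₁ × Fin p₂) (v : Fin s₁) :
    (rowIdx hs i v).2 = i.2 := rfl

lemma colIdx_snd (hs : s = s₁ * s₂) (i : Fin s × Fin p₁ × Fin p₂) (v : Fin s₂) :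
    (colIdx hs i v).2 = i.2 := rfl

lemma row_sum_eq (hs : s = s₁ * s₂) (b : Module.Basis (Fin s × Fin p₁ × Fin p₂) F K)
    (β α₁ α₂ : K) (hb : ∀ x, b x = β ^ (x.1 : ℕ) * α₁ ^ (x.2.1 : ℕ) * α₂ ^ (x.2.2 : ℕ))
    (i : Fin s × Fin p₁ × Fin p₂) :
    ∑ v : Fin s₁, b (rowIdx hs i v) =
      β ^ ((i.1 : ℕ) / s₁ * s₁) * α₁ ^ ((i.2.1 : ℕ)) * α₂ ^ ((i.2.2 : ℕ)) *
        ∑ u ∈ Finset.range s₁, β ^ u := by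
  rw [← Fin.sum_univ_eq_sum_range (fun u => β ^ u) s₁, Finset.mul_sum]
  refine Finset.sum_congr rfl fun v _ => ?_
  rw [hb]
  show β ^ ((i.1 : ℕ) / s₁ * s₁ + (v : ℕ)) * α₁ ^ ((i.2.1 : ℕ)) * α₂ ^ ((i.2.2 : ℕ)) =
    β ^ ((i.1 : ℕ) / s₁ * s₁) * α₁ ^ ((i.2.1 : ℕ)) * α₂ ^ ((i.2.2 : ℕ)) * β ^ (v : ℕ)
  ring

lemma col_sum_eq (hs : s = s₁ * s₂) (b : Module.Basis (Fin s × Fin p₁ × Fin p₂) F K)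
    (β α₁ α₂ : K) (hb : ∀ x, b x = β ^ (x.1 : ℕ) * α₁ ^ (x.2.1 : ℕ) * α₂ ^ (x.2.2 : ℕ))
    (i : Fin s × Fin p₁ × Fin p₂) :
    ∑ v : Fin s₂, b (colIdx hs i v) =
      β ^ ((i.1 : ℕ) % s₁) * α₁ ^ ((i.2.1 : ℕ)) * α₂ ^ ((i.2.2 : ℕ)) *
        ∑ u ∈ Finset.range s₂, β ^ (u * s₁) := by
  rw [← Fin.sum_univ_eq_sum_range (fun u => β ^ (u * s₁)) s₂, Finset.mul_sum]
  refine Finset.sum_congr rfl fun v _ => ?_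
  rw [hb]
  show β ^ ((i.1 : ℕ) % s₁ + (v : ℕ) * s₁) * α₁ ^ ((i.2.1 : ℕ)) * α₂ ^ ((i.2.2 : ℕ)) =
    β ^ ((i.1 : ℕ) % s₁) * α₁ ^ ((i.2.1 : ℕ)) * α₂ ^ ((i.2.2 : ℕ)) * β ^ ((v : ℕ) * s₁)
  ring


lemma rowIdx_div (hs : s = s₁ * s₂) (h01 : 0 < s₁) (i : Fin s × Fin p₁ × Fin p₂)
    (v : Fin s₁) : ((rowIdx hs i v).1 : ℕ) / s₁ = (i.1 : ℕ) / s₁ := by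
  rw [rowIdx_val, Nat.add_comm, Nat.add_mul_div_right _ _ h01,
    Nat.div_eq_of_lt v.isLt, Nat.zero_add]

lemma rowIdx_mod (hs : s = s₁ * s₂) (i : Fin s × Fin p₁ × Fin p₂)
    (v : Fin s₁) : ((rowIdx hs i v).1 : ℕ) % s₁ = (v : ℕ) := by
  rw [rowIdx_val, Nat.add_comm, Nat.add_mul_mod_self_right, Nat.mod_eq_of_lt v.isLt]

lemma colIdx_div (hs : s = s₁ * s₂) (h01 : 0 < s₁) (i : Fin s × Fin p₁ × Fin p₂)
    (v : Fin s₂) : ((colIdx hs i v).1 : ℕ) / s₁ = (v : ℕ) := by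
  rw [colIdx_val, Nat.add_mul_div_right _ _ h01,
    Nat.div_eq_of_lt (Nat.mod_lt _ h01), Nat.zero_add]

lemma colIdx_mod (hs : s = s₁ * s₂) (h01 : 0 < s₁) (i : Fin s × Fin p₁ × Fin p₂)
    (v : Fin s₂) : ((colIdx hs i v).1 : ℕ) % s₁ = (i.1 : ℕ) % s₁ := by
  rw [colIdx_val, Nat.add_mul_mod_self_right]
  exact Nat.mod_eq_of_lt (Nat.mod_lt _ h01)

/-- base point of the `v₂`-th row. -/
def baseRow (hs : s = s₁ * s₂) (h01 : 0 < s₁) (j : Fin p₁ × Fin p₂) (v₂ : Fin s₂) :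
    Fin s × Fin p₁ × Fin p₂ :=
  (⟨(v₂ : ℕ) * s₁, by
    have := te_arith hs h01 v₂.isLt; rwa [Nat.zero_add] at this⟩, j)

/-- base point of the `v₁`-th column. -/
def baseCol (hs : s = s₁ * s₂) (h02 : 0 < s₂) (j : Fin p₁ × Fin p₂) (v₁ : Fin s₁) :
    Fin s × Fin p₁ × Fin p₂ :=
  (⟨(v₁ : ℕ), by
    have := te_arith hs v₁.isLt h02
    rwa [Nat.zero_mul, Nat.add_zero] at this⟩, j)

lemma split_rows {M : Type*} [AddCommMonoid M] (hs : s = s₁ * s₂) (h01 : 0 < s₁)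
    (g : Fin s × Fin p₁ × Fin p₂ → M) (j : Fin p₁ × Fin p₂) :
    ∑ v : Fin s, g (v, j) =
      ∑ v₂ : Fin s₂, ∑ v₁ : Fin s₁, g (rowIdx hs (baseRow hs h01 j v₂) v₁) := by
  rw [sum_split_row hs (fun v => g (v, j))]
  refine Finset.sum_congr rfl fun v₂ _ => Finset.sum_congr rfl fun v₁ _ => ?_
  congr 1
  refine Prod.ext (Fin.ext ?_) rfl
  show (v₂ : ℕ) * s₁ + (v₁ : ℕ) = ((baseRow hs h01 j v₂).1 : ℕ) / s₁ * s₁ + (v₁ : ℕ)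
  rw [show ((baseRow hs h01 j v₂).1 : ℕ) = (v₂ : ℕ) * s₁ from rfl,
    Nat.mul_div_cancel _ h01]

lemma split_cols {M : Type*} [AddCommMonoid M] (hs : s = s₁ * s₂) (h02 : 0 < s₂)
    (g : Fin s × Fin p₁ × Fin p₂ → M) (j : Fin p₁ × Fin p₂) :
    ∑ v : Fin s, g (v, j) =
      ∑ v₁ : Fin s₁, ∑ v₂ : Fin s₂, g (colIdx hs (baseCol hs h02 j v₁) v₂) := by
  rw [sum_split_col hs (fun v => g (v, j))]
  refine Finset.sum_congr rfl fun v₁ _ => Finset.sum_congr rfl fun v₂ _ => ?_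
  congr 1
  refine Prod.ext (Fin.ext ?_) rfl
  show (v₁ : ℕ) + (v₂ : ℕ) * s₁ = ((baseCol hs h02 j v₁).1 : ℕ) % s₁ + (v₂ : ℕ) * s₁
  rw [show ((baseCol hs h02 j v₁).1 : ℕ) = (v₁ : ℕ) from rfl, Nat.mod_eq_of_lt v₁.isLt]

lemma baseRow_snd (hs : s = s₁ * s₂) (h01 : 0 < s₁) (j : Fin p₁ × Fin p₂) (v₂ : Fin s₂) :
    (baseRow hs h01 j v₂).2 = j := rfl

lemma baseCol_snd (hs : s = s₁ * s₂) (h02 : 0 < s₂) (j : Fin p₁ × Fin p₂) (v₁ : Fin s₁) :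
    (baseCol hs h02 j v₁).2 = j := rfl

end TwoErasure

/-- Two-erasure intersection lemma:
`dim_F(span_F(S_{i₁}) ∩ span_F(S_{i₂})) = p₁ p₂`. -/
theorem stmt12 (F K : Type*) [Field F] [Field K] [Algebra F K]
    (k d : ℕ) (hkd : k ≤ d)
    (s₁ s₂ s p₁ p₂ : ℕ)
    (hs₁ : s₁ = d + 1 - k) (hs₂ : s₂ = d + 2 - k) (hs : s = s₁ * s₂)
    (hp₁ : p₁.Prime) (hp₂ : p₂.Prime) (hne : p₁ ≠ p₂)
    (hd₁ : s₁ ∣ p₁ - 1) (hd₂ : s₂ ∣ p₂ - 1)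
    (β α₁ α₂ : K)
    (b : Module.Basis (Fin s × Fin p₁ × Fin p₂) F K)
    (hb : ∀ x, b x = β ^ (x.1 : ℕ) * α₁ ^ (x.2.1 : ℕ) * α₂ ^ (x.2.2 : ℕ))
    (W₁ W₂ S₁ S₂ : Set K)
    (hW₁ : W₁ = {x | ∃ u < s₁, ∃ q < (p₁ - 1) / s₁, x = β ^ u * α₁ ^ (u + q * s₁)} ∪
        {α₁ ^ (p₁ - 1) * ∑ u ∈ Finset.range s₁, β ^ u})
    (hW₂ : W₂ = {x | ∃ u < s₂, ∃ q < (p₂ - 1) / s₂, x = β ^ (u * s₁) * α₂ ^ (u + q * s₂)} ∪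
        {α₂ ^ (p₂ - 1) * ∑ u ∈ Finset.range s₂, β ^ (u * s₁)})
    (hS₁ : S₁ = {x | ∃ u₂ < s₂, ∃ q₂ < p₂, ∃ w ∈ W₁, x = β ^ (u₂ * s₁) * α₂ ^ q₂ * w})
    (hS₂ : S₂ = {x | ∃ u₁ < s₁, ∃ q₁ < p₁, ∃ w ∈ W₂, x = β ^ u₁ * α₁ ^ q₁ * w}) :
    Module.finrank F ↥(Submodule.span F S₁ ⊓ Submodule.span F S₂) = p₁ * p₂ := by
  classical
  have hp₁2 := hp₁.two_le
  have hp₂2 := hp₂.two_le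
  have h01 : 0 < s₁ := by omega
  have h02 : 0 < s₂ := by omega
  have h0s : 0 < s := by rw [hs]; exact Nat.mul_pos h01 h02
  obtain ⟨m₁, hm₁⟩ := hd₁
  have hm₁' : (p₁ - 1) / s₁ = m₁ := by rw [hm₁]; exact Nat.mul_div_cancel_left _ h01
  obtain ⟨m₂, hm₂⟩ := hd₂
  have hm₂' : (p₂ - 1) / s₂ = m₂ := by rw [hm₂]; exact Nat.mul_div_cancel_left _ h02
  have hcard : Fintype.card (Fin s × Fin p₁ × Fin p₂) = Module.finrank F K :=
    (Module.finrank_eq_card_basis b).symm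
  set I₁ : Set (Fin s × Fin p₁ × Fin p₂) :=
    {i | (i.1 : ℕ) % s₁ = if (i.2.1 : ℕ) = p₁ - 1 then 0 else (i.2.1 : ℕ) % s₁} with hI₁
  set I₂ : Set (Fin s × Fin p₁ × Fin p₂) :=
    {i | (i.1 : ℕ) / s₁ = if (i.2.2 : ℕ) = p₂ - 1 then 0 else (i.2.2 : ℕ) % s₂} with hI₂
  -- membership of generators in S₁ / S₂
  have hgenS₁ : ∀ i : Fin s × Fin p₁ × Fin p₂,
      (i.2.1 : ℕ) ≠ p₁ - 1 → (i.1 : ℕ) % s₁ = (i.2.1 : ℕ) % s₁ → b i ∈ S₁ := by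
    intro i hne1 hmodeq
    rw [hS₁]
    have hq₁lt : (i.2.1 : ℕ) < p₁ - 1 := by have := i.2.1.isLt; omega
    have hqdiv : (i.2.1 : ℕ) / s₁ < m₁ := Nat.div_lt_of_lt_mul (hm₁ ▸ hq₁lt)
    refine ⟨(i.1 : ℕ) / s₁, te_div_lt hs i.1, (i.2.2 : ℕ), i.2.2.isLt,
      β ^ ((i.1 : ℕ) % s₁) * α₁ ^ ((i.1 : ℕ) % s₁ + (i.2.1 : ℕ) / s₁ * s₁), ?_, ?_⟩
    · rw [hW₁]
      exact Set.mem_union_left _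
        ⟨(i.1 : ℕ) % s₁, Nat.mod_lt _ h01, (i.2.1 : ℕ) / s₁,
          by rw [hm₁']; exact hqdiv, rfl⟩
    · have he : (i.1 : ℕ) % s₁ + (i.2.1 : ℕ) / s₁ * s₁ = (i.2.1 : ℕ) := by
        rw [hmodeq]; exact Nat.mod_add_div' _ _
      rw [hb, he]
      have he2 : (i.1 : ℕ) = (i.1 : ℕ) / s₁ * s₁ + (i.1 : ℕ) % s₁ :=
        (Nat.div_add_mod' _ _).symm
      conv_lhs => rw [he2]
      ring
  have hrowS₁ : ∀ i : Fin s × Fin p₁ × Fin p₂, (i.2.1 : ℕ) = p₁ - 1 →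
      (∑ v : Fin s₁, b (rowIdx hs i v)) ∈ S₁ := by
    intro i h1
    rw [hS₁]
    refine ⟨(i.1 : ℕ) / s₁, te_div_lt hs i.1, (i.2.2 : ℕ), i.2.2.isLt,
      α₁ ^ (p₁ - 1) * ∑ u ∈ Finset.range s₁, β ^ u, ?_, ?_⟩
    · rw [hW₁]; exact Set.mem_union_right _ rfl
    · rw [row_sum_eq hs b β α₁ α₂ hb i, h1]; ring
  have hgenS₂ : ∀ i : Fin s × Fin p₁ × Fin p₂,
      (i.2.2 : ℕ) ≠ p₂ - 1 → (i.1 : ℕ) / s₁ = (i.2.2 : ℕ) % s₂ → b i ∈ S₂ := by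
    intro i hne2 hdiveq
    rw [hS₂]
    have hq₂lt : (i.2.2 : ℕ) < p₂ - 1 := by have := i.2.2.isLt; omega
    have hqdiv : (i.2.2 : ℕ) / s₂ < m₂ := Nat.div_lt_of_lt_mul (hm₂ ▸ hq₂lt)
    refine ⟨(i.1 : ℕ) % s₁, Nat.mod_lt _ h01, (i.2.1 : ℕ), i.2.1.isLt,
      β ^ ((i.2.2 : ℕ) % s₂ * s₁) * α₂ ^ ((i.2.2 : ℕ) % s₂ + (i.2.2 : ℕ) / s₂ * s₂), ?_, ?_⟩
    · rw [hW₂]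
      exact Set.mem_union_left _
        ⟨(i.2.2 : ℕ) % s₂, Nat.mod_lt _ h02, (i.2.2 : ℕ) / s₂,
          by rw [hm₂']; exact hqdiv, rfl⟩
    · have he : (i.2.2 : ℕ) % s₂ + (i.2.2 : ℕ) / s₂ * s₂ = (i.2.2 : ℕ) :=
        Nat.mod_add_div' _ _
      rw [hb, he, ← hdiveq]
      have he2 : (i.1 : ℕ) = (i.1 : ℕ) % s₁ + (i.1 : ℕ) / s₁ * s₁ :=
        (Nat.mod_add_div' _ _).symm
      conv_lhs => rw [he2]
      ring
  have hcolS₂ : ∀ i : Fin s × Fin p₁ × Fin p₂, (i.2.2 : ℕ) = p₂ - 1 →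
      (∑ v : Fin s₂, b (colIdx hs i v)) ∈ S₂ := by
    intro i h2
    rw [hS₂]
    refine ⟨(i.1 : ℕ) % s₁, Nat.mod_lt _ h01, (i.2.1 : ℕ), i.2.1.isLt,
      α₂ ^ (p₂ - 1) * ∑ u ∈ Finset.range s₂, β ^ (u * s₁), ?_, ?_⟩
    · rw [hW₂]; exact Set.mem_union_right _ rfl
    · rw [col_sum_eq hs b β α₁ α₂ hb i, h2]; ring
  -- membership of basis vectors in the spans of cvec-image sets
  have hbmem₁ : ∀ i : Fin s × Fin p₁ × Fin p₂,
      (i.2.1 : ℕ) ≠ p₁ - 1 → (i.1 : ℕ) % s₁ = (i.2.1 : ℕ) % s₁ →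
      b i ∈ Submodule.span F (cvec hs b '' I₁) := by
    intro i hne1 hmodeq
    have hiI : i ∈ I₁ := by
      simp only [hI₁, Set.mem_setOf_eq, if_neg hne1]; exact hmodeq
    by_cases h2 : ((i.2.2 : ℕ) = p₂ - 1 ∧ (i.1 : ℕ) / s₁ = 0)
    · have hcc : cvec hs b i = ∑ v : Fin s₂, b (colIdx hs i v) :=
        cvec_col hs b (fun hC => hne1 hC.1) h2
      have hidx : colIdx hs i ⟨0, h02⟩ = i := by
        refine Prod.ext (Fin.ext ?_) rfl
        show (i.1 : ℕ) % s₁ + 0 * s₁ = (i.1 : ℕ)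
        rw [Nat.mod_eq_of_lt ((Nat.div_eq_zero_iff.mp h2.2).resolve_left (by omega))]
        omega
      have hsum := Finset.add_sum_erase Finset.univ
        (fun v : Fin s₂ => b (colIdx hs i v)) (Finset.mem_univ (⟨0, h02⟩ : Fin s₂))
      have hbi : b i = cvec hs b i -
          ∑ v ∈ Finset.univ.erase ⟨0, h02⟩, b (colIdx hs i v) := by
        rw [hcc, ← hsum]; simp only [hidx]; ring
      rw [hbi]
      refine sub_mem (Submodule.subset_span ⟨i, hiI, rfl⟩)
        (Submodule.sum_mem _ fun v hv => ?_)
      have hvne : (v : ℕ) ≠ 0 := fun h => Finset.ne_of_mem_erase hv (Fin.ext h)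
      have hjI : colIdx hs i v ∈ I₁ := by
        simp only [hI₁, Set.mem_setOf_eq, colIdx_snd]
        have e : (if (i.2.1 : ℕ) = p₁ - 1 then 0 else (i.2.1 : ℕ) % s₁) = (i.2.1 : ℕ) % s₁ := if_neg hne1
        exact (colIdx_mod hs h01 i v).trans (hmodeq.trans e.symm)
      have hsingle : cvec hs b (colIdx hs i v) = b (colIdx hs i v) :=
        cvec_single hs b (fun hC => hne1 hC.1)
          (fun hC => hvne (by rw [← colIdx_div hs h01 i v]; exact hC.2))
      rw [← hsingle]
      exact Submodule.subset_span ⟨_, hjI, rfl⟩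
    · rw [← cvec_single hs b (fun hC => hne1 hC.1) h2]
      exact Submodule.subset_span ⟨i, hiI, rfl⟩
  have hrowmem₁ : ∀ i : Fin s × Fin p₁ × Fin p₂,
      (i.2.1 : ℕ) = p₁ - 1 → (i.1 : ℕ) % s₁ = 0 →
      (∑ v : Fin s₁, b (rowIdx hs i v)) ∈ Submodule.span F (cvec hs b '' I₁) := by
    intro i h1 hm0
    have hiI : i ∈ I₁ := by
      simp only [hI₁, Set.mem_setOf_eq, if_pos h1]; exact hm0
    by_cases h2 : ((i.2.2 : ℕ) = p₂ - 1 ∧ (i.1 : ℕ) / s₁ = 0)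
    · -- total case
      have hi0 : (i.1 : ℕ) = 0 := by
        have h3 := Nat.div_add_mod' (i.1 : ℕ) s₁
        rw [h2.2, hm0] at h3; simpa using h3.symm
      have hcc : cvec hs b i = ∑ v : Fin s, b (v, i.2) := cvec_t hs b ⟨h1, hm0⟩ h2
      have hsplit : cvec hs b i =
          ∑ v₂ : Fin s₂, ∑ v₁ : Fin s₁, b (rowIdx hs (baseRow hs h01 i.2 v₂) v₁) := by
        rw [hcc]; exact split_rows hs h01 b i.2
      have hbr0 : baseRow hs h01 i.2 ⟨0, h02⟩ = i := by
        refine Prod.ext (Fin.ext ?_) rfl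
        show 0 * s₁ = (i.1 : ℕ)
        rw [hi0, Nat.zero_mul]
      have hsum := Finset.add_sum_erase Finset.univ
        (fun v₂ : Fin s₂ => ∑ v₁ : Fin s₁, b (rowIdx hs (baseRow hs h01 i.2 v₂) v₁))
        (Finset.mem_univ (⟨0, h02⟩ : Fin s₂))
      have heq : (∑ v : Fin s₁, b (rowIdx hs i v)) = cvec hs b i -
          ∑ v₂ ∈ Finset.univ.erase ⟨0, h02⟩,
            ∑ v₁ : Fin s₁, b (rowIdx hs (baseRow hs h01 i.2 v₂) v₁) := by
        rw [hsplit, ← hsum]; simp only [hbr0]; ring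
      rw [heq]
      refine sub_mem (Submodule.subset_span ⟨i, hiI, rfl⟩)
        (Submodule.sum_mem _ fun v₂ hv₂ => ?_)
      have hvne : (v₂ : ℕ) ≠ 0 := fun h => Finset.ne_of_mem_erase hv₂ (Fin.ext h)
      have hbm : ((baseRow hs h01 i.2 v₂).1 : ℕ) % s₁ = 0 := Nat.mul_mod_left _ _
      have hbd : ((baseRow hs h01 i.2 v₂).1 : ℕ) / s₁ = (v₂ : ℕ) :=
        Nat.mul_div_cancel _ h01
      have hrow : cvec hs b (baseRow hs h01 i.2 v₂) =
          ∑ v₁ : Fin s₁, b (rowIdx hs (baseRow hs h01 i.2 v₂) v₁) :=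
        cvec_row hs b ⟨h1, hbm⟩ (fun hC => hvne (by rw [← hbd]; exact hC.2))
      have hjI : baseRow hs h01 i.2 v₂ ∈ I₁ := by
        simp only [hI₁, Set.mem_setOf_eq, baseRow_snd]
        have e : (if (i.2.1 : ℕ) = p₁ - 1 then 0 else (i.2.1 : ℕ) % s₁) = 0 := if_pos h1
        exact hbm.trans e.symm
      rw [← hrow]
      exact Submodule.subset_span ⟨_, hjI, rfl⟩
    · rw [← cvec_row hs b ⟨h1, hm0⟩ h2]
      exact Submodule.subset_span ⟨i, hiI, rfl⟩
  have hbmem₂ : ∀ i : Fin s × Fin p₁ × Fin p₂,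
      (i.2.2 : ℕ) ≠ p₂ - 1 → (i.1 : ℕ) / s₁ = (i.2.2 : ℕ) % s₂ →
      b i ∈ Submodule.span F (cvec hs b '' I₂) := by
    intro i hne2 hdiveq
    have hiI : i ∈ I₂ := by
      simp only [hI₂, Set.mem_setOf_eq, if_neg hne2]; exact hdiveq
    have h2' : ¬((i.2.2 : ℕ) = p₂ - 1 ∧ (i.1 : ℕ) / s₁ = 0) := fun hC => hne2 hC.1
    by_cases h1 : ((i.2.1 : ℕ) = p₁ - 1 ∧ (i.1 : ℕ) % s₁ = 0)
    · have hcc : cvec hs b i = ∑ v : Fin s₁, b (rowIdx hs i v) := cvec_row hs b h1 h2'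
      have hidx : rowIdx hs i ⟨0, h01⟩ = i := by
        refine Prod.ext (Fin.ext ?_) rfl
        show (i.1 : ℕ) / s₁ * s₁ + 0 = (i.1 : ℕ)
        rw [Nat.add_zero]
        exact Nat.div_mul_cancel (Nat.dvd_of_mod_eq_zero h1.2)
      have hsum := Finset.add_sum_erase Finset.univ
        (fun v : Fin s₁ => b (rowIdx hs i v)) (Finset.mem_univ (⟨0, h01⟩ : Fin s₁))
      have hbi : b i = cvec hs b i -
          ∑ v ∈ Finset.univ.erase ⟨0, h01⟩, b (rowIdx hs i v) := by
        rw [hcc, ← hsum]; simp only [hidx]; ring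
      rw [hbi]
      refine sub_mem (Submodule.subset_span ⟨i, hiI, rfl⟩)
        (Submodule.sum_mem _ fun v hv => ?_)
      have hvne : (v : ℕ) ≠ 0 := fun h => Finset.ne_of_mem_erase hv (Fin.ext h)
      have hjI : rowIdx hs i v ∈ I₂ := by
        simp only [hI₂, Set.mem_setOf_eq, rowIdx_snd]
        have e : (if (i.2.2 : ℕ) = p₂ - 1 then 0 else (i.2.2 : ℕ) % s₂) = (i.2.2 : ℕ) % s₂ := if_neg hne2
        exact (rowIdx_div hs h01 i v).trans (hdiveq.trans e.symm)
      have hsingle : cvec hs b (rowIdx hs i v) = b (rowIdx hs i v) :=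
        cvec_single hs b
          (fun hC => hvne (by rw [← rowIdx_mod hs i v]; exact hC.2))
          (fun hC => hne2 hC.1)
      rw [← hsingle]
      exact Submodule.subset_span ⟨_, hjI, rfl⟩
    · rw [← cvec_single hs b h1 h2']
      exact Submodule.subset_span ⟨i, hiI, rfl⟩
  have hcolmem₂ : ∀ i : Fin s × Fin p₁ × Fin p₂,
      (i.2.2 : ℕ) = p₂ - 1 → (i.1 : ℕ) / s₁ = 0 →
      (∑ v : Fin s₂, b (colIdx hs i v)) ∈ Submodule.span F (cvec hs b '' I₂) := by
    intro i h2 hd0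
    have hiI : i ∈ I₂ := by
      simp only [hI₂, Set.mem_setOf_eq, if_pos h2]; exact hd0
    by_cases h1 : ((i.2.1 : ℕ) = p₁ - 1 ∧ (i.1 : ℕ) % s₁ = 0)
    · -- total case
      have hi0 : (i.1 : ℕ) = 0 := by
        have h3 := Nat.div_add_mod' (i.1 : ℕ) s₁
        rw [hd0, h1.2] at h3; simpa using h3.symm
      have hcc : cvec hs b i = ∑ v : Fin s, b (v, i.2) := cvec_t hs b h1 ⟨h2, hd0⟩
      have hsplit : cvec hs b i =
          ∑ v₁ : Fin s₁, ∑ v₂ : Fin s₂, b (colIdx hs (baseCol hs h02 i.2 v₁) v₂) := by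
        rw [hcc]; exact split_cols hs h02 b i.2
      have hbc0 : baseCol hs h02 i.2 ⟨0, h01⟩ = i := by
        refine Prod.ext (Fin.ext ?_) rfl
        show 0 = (i.1 : ℕ)
        omega
      have hsum := Finset.add_sum_erase Finset.univ
        (fun v₁ : Fin s₁ => ∑ v₂ : Fin s₂, b (colIdx hs (baseCol hs h02 i.2 v₁) v₂))
        (Finset.mem_univ (⟨0, h01⟩ : Fin s₁))
      have heq : (∑ v : Fin s₂, b (colIdx hs i v)) = cvec hs b i -
          ∑ v₁ ∈ Finset.univ.erase ⟨0, h01⟩,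
            ∑ v₂ : Fin s₂, b (colIdx hs (baseCol hs h02 i.2 v₁) v₂) := by
        rw [hsplit, ← hsum]; simp only [hbc0]; ring
      rw [heq]
      refine sub_mem (Submodule.subset_span ⟨i, hiI, rfl⟩)
        (Submodule.sum_mem _ fun v₁ hv₁ => ?_)
      have hvne : (v₁ : ℕ) ≠ 0 := fun h => Finset.ne_of_mem_erase hv₁ (Fin.ext h)
      have hbm : ((baseCol hs h02 i.2 v₁).1 : ℕ) % s₁ = (v₁ : ℕ) :=
        Nat.mod_eq_of_lt v₁.isLt
      have hbd : ((baseCol hs h02 i.2 v₁).1 : ℕ) / s₁ = 0 :=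
        Nat.div_eq_of_lt v₁.isLt
      have hcol : cvec hs b (baseCol hs h02 i.2 v₁) =
          ∑ v₂ : Fin s₂, b (colIdx hs (baseCol hs h02 i.2 v₁) v₂) :=
        cvec_col hs b (fun hC => hvne (by rw [← hbm]; exact hC.2)) ⟨h2, hbd⟩
      have hjI : baseCol hs h02 i.2 v₁ ∈ I₂ := by
        simp only [hI₂, Set.mem_setOf_eq, baseCol_snd]
        have e : (if (i.2.2 : ℕ) = p₂ - 1 then 0 else (i.2.2 : ℕ) % s₂) = 0 := if_pos h2
        exact hbd.trans e.symm
      rw [← hcol]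
      exact Submodule.subset_span ⟨_, hjI, rfl⟩
    · rw [← cvec_col hs b h1 ⟨h2, hd0⟩]
      exact Submodule.subset_span ⟨i, hiI, rfl⟩
  -- the two span identities
  have hspan1 : Submodule.span F S₁ = Submodule.span F (cvec hs b '' I₁) := by
    apply le_antisymm
    · rw [Submodule.span_le]
      intro x hx
      rw [hS₁] at hx
      obtain ⟨u₂, hu₂, q₂, hq₂, w, hw, rfl⟩ := hx
      rw [hW₁] at hw
      rcases hw with ⟨u₁, hu₁, q, hq, rfl⟩ | hw
      · rw [hm₁'] at hq
        have hq₁lt : u₁ + q * s₁ < p₁ - 1 := hm₁ ▸ te_arith hm₁ hu₁ hq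
        have hilt : u₁ + u₂ * s₁ < s := te_arith hs hu₁ hu₂
        have hxb : β ^ (u₂ * s₁) * α₂ ^ q₂ * (β ^ u₁ * α₁ ^ (u₁ + q * s₁)) =
            b (⟨u₁ + u₂ * s₁, hilt⟩, ⟨u₁ + q * s₁, by omega⟩, ⟨q₂, hq₂⟩) := by
          rw [hb]
          show _ = β ^ (u₁ + u₂ * s₁) * α₁ ^ (u₁ + q * s₁) * α₂ ^ q₂
          ring
        rw [hxb]
        refine hbmem₁ _ (by show u₁ + q * s₁ ≠ p₁ - 1; omega) ?_
        show (u₁ + u₂ * s₁) % s₁ = (u₁ + q * s₁) % s₁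
        rw [Nat.add_mul_mod_self_right, Nat.add_mul_mod_self_right]
      · rw [Set.mem_singleton_iff] at hw
        subst hw
        have hilt : u₂ * s₁ < s := by
          have := te_arith hs h01 hu₂; rwa [Nat.zero_add] at this
        have hx' : β ^ (u₂ * s₁) * α₂ ^ q₂ *
            (α₁ ^ (p₁ - 1) * ∑ u ∈ Finset.range s₁, β ^ u) =
            ∑ v : Fin s₁,
              b (rowIdx hs (⟨u₂ * s₁, hilt⟩, ⟨p₁ - 1, by omega⟩, ⟨q₂, hq₂⟩) v) := by
          rw [row_sum_eq hs b β α₁ α₂ hb]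
          show _ = β ^ (u₂ * s₁ / s₁ * s₁) * α₁ ^ (p₁ - 1) * α₂ ^ q₂ * _
          rw [Nat.mul_div_cancel _ h01]
          ring
        rw [hx']
        exact hrowmem₁ _ rfl (Nat.mul_mod_left _ _)
    · rw [Submodule.span_le]
      rintro x ⟨i, hiI, rfl⟩
      simp only [hI₁, Set.mem_setOf_eq] at hiI
      by_cases h1 : (i.2.1 : ℕ) = p₁ - 1
      · rw [if_pos h1] at hiI
        by_cases h2 : ((i.2.2 : ℕ) = p₂ - 1 ∧ (i.1 : ℕ) / s₁ = 0)
        · rw [cvec_t hs b ⟨h1, hiI⟩ h2, split_rows hs h01 b i.2]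
          exact Submodule.sum_mem _ fun v₂ _ =>
            Submodule.subset_span (by rw [hS₁] at hrowS₁ ⊢; exact hrowS₁ _ h1)
        · rw [cvec_row hs b ⟨h1, hiI⟩ h2]
          exact Submodule.subset_span (hrowS₁ i h1)
      · rw [if_neg h1] at hiI
        by_cases h2 : ((i.2.2 : ℕ) = p₂ - 1 ∧ (i.1 : ℕ) / s₁ = 0)
        · rw [cvec_col hs b (fun hC => h1 hC.1) h2]
          refine Submodule.sum_mem _ fun v _ => Submodule.subset_span ?_
          refine hgenS₁ _ h1 ?_
          rw [colIdx_mod hs h01]; exact hiI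
        · rw [cvec_single hs b (fun hC => h1 hC.1) h2]
          exact Submodule.subset_span (hgenS₁ i h1 hiI)
  have hspan2 : Submodule.span F S₂ = Submodule.span F (cvec hs b '' I₂) := by
    apply le_antisymm
    · rw [Submodule.span_le]
      intro x hx
      rw [hS₂] at hx
      obtain ⟨u₁, hu₁, q₁, hq₁, w, hw, rfl⟩ := hx
      rw [hW₂] at hw
      rcases hw with ⟨u₂, hu₂, q, hq, rfl⟩ | hw
      · rw [hm₂'] at hq
        have hq₂lt : u₂ + q * s₂ < p₂ - 1 := te_arith hm₂ hu₂ hq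
        have hilt : u₁ + u₂ * s₁ < s := te_arith hs hu₁ hu₂
        have hxb : β ^ u₁ * α₁ ^ q₁ * (β ^ (u₂ * s₁) * α₂ ^ (u₂ + q * s₂)) =
            b (⟨u₁ + u₂ * s₁, hilt⟩, ⟨q₁, hq₁⟩, ⟨u₂ + q * s₂, by omega⟩) := by
          rw [hb]
          show _ = β ^ (u₁ + u₂ * s₁) * α₁ ^ q₁ * α₂ ^ (u₂ + q * s₂)
          ring
        rw [hxb]
        refine hbmem₂ _ (by show u₂ + q * s₂ ≠ p₂ - 1; omega) ?_
        show (u₁ + u₂ * s₁) / s₁ = (u₂ + q * s₂) % s₂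
        rw [Nat.add_mul_div_right _ _ h01, Nat.div_eq_of_lt hu₁, Nat.zero_add,
          Nat.add_mul_mod_self_right, Nat.mod_eq_of_lt hu₂]
      · rw [Set.mem_singleton_iff] at hw
        subst hw
        have hilt : u₁ < s := by
          have := te_arith hs hu₁ h02
          rwa [Nat.zero_mul, Nat.add_zero] at this
        have hx' : β ^ u₁ * α₁ ^ q₁ *
            (α₂ ^ (p₂ - 1) * ∑ u ∈ Finset.range s₂, β ^ (u * s₁)) =
            ∑ v : Fin s₂,
              b (colIdx hs (⟨u₁, hilt⟩, ⟨q₁, hq₁⟩, ⟨p₂ - 1, by omega⟩) v) := by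
          rw [col_sum_eq hs b β α₁ α₂ hb]
          show _ = β ^ (u₁ % s₁) * α₁ ^ q₁ * α₂ ^ (p₂ - 1) * _
          rw [Nat.mod_eq_of_lt hu₁]
          ring
        rw [hx']
        exact hcolmem₂ _ rfl (Nat.div_eq_of_lt hu₁)
    · rw [Submodule.span_le]
      rintro x ⟨i, hiI, rfl⟩
      simp only [hI₂, Set.mem_setOf_eq] at hiI
      by_cases h2 : (i.2.2 : ℕ) = p₂ - 1
      · rw [if_pos h2] at hiI
        by_cases h1 : ((i.2.1 : ℕ) = p₁ - 1 ∧ (i.1 : ℕ) % s₁ = 0)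
        · rw [cvec_t hs b h1 ⟨h2, hiI⟩, split_cols hs h02 b i.2]
          exact Submodule.sum_mem _ fun v₁ _ =>
            Submodule.subset_span (hcolS₂ _ h2)
        · rw [cvec_col hs b h1 ⟨h2, hiI⟩]
          exact Submodule.subset_span (hcolS₂ i h2)
      · rw [if_neg h2] at hiI
        have h2' : ¬((i.2.2 : ℕ) = p₂ - 1 ∧ (i.1 : ℕ) / s₁ = 0) := fun hC => h2 hC.1
        by_cases h1 : ((i.2.1 : ℕ) = p₁ - 1 ∧ (i.1 : ℕ) % s₁ = 0)
        · rw [cvec_row hs b h1 h2']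
          refine Submodule.sum_mem _ fun v _ => Submodule.subset_span ?_
          refine hgenS₂ _ h2 ?_
          rw [rowIdx_div hs h01]; exact hiI
        · rw [cvec_single hs b h1 h2']
          exact Submodule.subset_span (hgenS₂ i h2 hiI)
  -- finishing: intersection of coordinate subspaces
  set cb : Module.Basis (Fin s × Fin p₁ × Fin p₂) F K :=
    basisOfTopLeSpanOfCardEqFinrank (cvec hs b) (cvec_top hs b) hcard with hcbdef
  have hcb : ⇑cb = cvec hs b := coe_basisOfTopLeSpanOfCardEqFinrank _ _ _
  have hg1 : ∀ q : Fin p₁ × Fin p₂,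
      (if (q.1 : ℕ) = p₁ - 1 then 0 else (q.1 : ℕ) % s₁) < s₁ := by
    intro q; split
    · exact h01
    · exact Nat.mod_lt _ h01
  have hg2 : ∀ q : Fin p₁ × Fin p₂,
      (if (q.2 : ℕ) = p₂ - 1 then 0 else (q.2 : ℕ) % s₂) < s₂ := by
    intro q; split
    · exact h02
    · exact Nat.mod_lt _ h02
  set g : Fin p₁ × Fin p₂ → Fin s × Fin p₁ × Fin p₂ := fun q =>
    (⟨(if (q.1 : ℕ) = p₁ - 1 then 0 else (q.1 : ℕ) % s₁) +
      (if (q.2 : ℕ) = p₂ - 1 then 0 else (q.2 : ℕ) % s₂) * s₁,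
      te_arith hs (hg1 q) (hg2 q)⟩, q.1, q.2) with hgdef
  have hginj : Function.Injective g := fun a a' h => congrArg Prod.snd h
  have hrange : I₁ ∩ I₂ = Set.range g := by
    ext i
    constructor
    · rintro ⟨hi1, hi2⟩
      simp only [hI₁, Set.mem_setOf_eq] at hi1
      simp only [hI₂, Set.mem_setOf_eq] at hi2
      refine ⟨i.2, ?_⟩
      refine Prod.ext (Fin.ext ?_) rfl
      show (if (i.2.1 : ℕ) = p₁ - 1 then 0 else (i.2.1 : ℕ) % s₁) +
        (if (i.2.2 : ℕ) = p₂ - 1 then 0 else (i.2.2 : ℕ) % s₂) * s₁ = (i.1 : ℕ)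
      rw [← hi1, ← hi2]
      exact Nat.mod_add_div' _ _
    · rintro ⟨q, rfl⟩
      constructor
      · simp only [hI₁, Set.mem_setOf_eq, hgdef]
        rw [Nat.add_mul_mod_self_right, Nat.mod_eq_of_lt (hg1 q)]
      · simp only [hI₂, Set.mem_setOf_eq, hgdef]
        rw [Nat.add_mul_div_right _ _ h01, Nat.div_eq_of_lt (hg1 q), Nat.zero_add]
  rw [hspan1, hspan2, ← hcb, span_image_inter cb I₁ I₂, hrange, ← Set.range_comp,
    finrank_span_eq_card (cb.linearIndependent.comp g hginj)]
  simp
end
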